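/- Top-k sum removal inequality: for a finite multiset S of nonnegative reals, an element x ∈ S, and k ≥ 1, it holds that x + topSum(S \ {x}, k - 1) ≤ topSum(S, k) whenever x is among the k largest elements of S; and in general x + topSum(S \ {x}, k - 1) ≤ topSum(S, k) + max(0, x - m) where m is the k-th largest element. In particular, if x ≤ every element counted in topSum(S, k), then x + topSum(S \ {x}, k-1) ≤ topSum(S, k). -/

import Mathlib

/-- Sum of the `k` largest elements of a multiset of reals. -/
noncomputable def topSum (S : Multiset ℝ) (k : ℕ) : ℝ :=
  ((S.sort (· ≤ ·)).reverse.take k).sum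

/-- The list of elements of `S` in descending order. -/
noncomputable def descList (S : Multiset ℝ) : List ℝ :=
  (S.sort (· ≤ ·)).reverse

lemma take_erase_of_mem_take {α} [DecidableEq α] :
    ∀ (l : List α) (k : ℕ) (x : α), x ∈ l.take k →
      (l.erase x).take (k - 1) = (l.take k).erase x := by
  intro l
  induction l with
  | nil => intro k x h; simp at h
  | cons a t ih =>
    intro k x h
    match k with
    | 0 => simp at h
    | n + 1 =>
      by_cases hax : a = x
      · subst hax
        rw [List.erase_cons_head, List.take_succ_cons, List.erase_cons_head,
          Nat.add_sub_cancel]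
      · have hxt : x ∈ t.take n := by
          simp only [List.take_succ_cons, List.mem_cons] at h
          rcases h with h | h
          · exact absurd h.symm hax
          · exact h
        match n with
        | 0 => simp at hxt
        | m + 1 =>
          have hbe : ¬(a == x) = true := by simpa using hax
          have := ih (m + 1) x hxt
          rw [Nat.add_sub_cancel] at this ⊢
          rw [List.erase_cons_tail hbe, List.take_succ_cons, List.take_succ_cons,
            List.erase_cons_tail hbe, this]

lemma take_erase_of_not_mem_take {α} [DecidableEq α] :
    ∀ (l : List α) (j : ℕ) (x : α), x ∉ l.take j →
      (l.erase x).take j = l.take j := by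
  intro l
  induction l with
  | nil => intro j x _; rfl
  | cons a t ih =>
    intro j x h
    match j with
    | 0 => rfl
    | n + 1 =>
      simp only [List.take_succ_cons, List.mem_cons, not_or] at h
      have hbe : ¬(a == x) = true := by simpa using fun e => h.1 e.symm
      rw [List.erase_cons_tail hbe, List.take_succ_cons, List.take_succ_cons, ih n x h.2]

lemma descList_erase (S : Multiset ℝ) (x : ℝ) :
    descList (S.erase x) = (descList S).erase x := by
  refine (fun h1 h2 h3 => List.Perm.eq_of_pairwise' (r := (· ≥ ·)) h2 h3 h1) ?_ ?_ ?_
  · rw [← Multiset.coe_eq_coe]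
    unfold descList
    rw [← Multiset.coe_erase]
    simp [Multiset.coe_reverse, Multiset.sort_eq]
  · exact List.pairwise_reverse.mpr ((S.erase x).pairwise_sort (· ≤ ·))
  · exact ((List.pairwise_reverse.mpr (S.pairwise_sort (· ≤ ·))).sublist
      (List.erase_sublist (a := x)))

theorem topSum_erase (S : Multiset ℝ) (x : ℝ) (k : ℕ)
    (hnn : ∀ y ∈ S, (0:ℝ) ≤ y)
    (hx : x ∈ S) (hk : 1 ≤ k) :
    ((x ∈ (descList S).take k) →
      x + topSum (S.erase x) (k - 1) ≤ topSum S k) ∧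
    (x + topSum (S.erase x) (k - 1)
      ≤ topSum S k + max 0 (x - (descList S).getD (k - 1) 0)) ∧
    ((∀ y ∈ (descList S).take k, x ≤ y) →
      x + topSum (S.erase x) (k - 1) ≤ topSum S k) := by
  set L := descList S with hL
  have hLs : L.Pairwise (· ≥ ·) := List.pairwise_reverse.mpr (S.pairwise_sort (· ≤ ·))
  have hxL : x ∈ L := by
    rw [hL]; unfold descList; rw [List.mem_reverse, Multiset.mem_sort]; exact hx
  have hts : topSum S k = (L.take k).sum := rfl
  have hte : topSum (S.erase x) (k - 1) = ((L.erase x).take (k - 1)).sum := by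
    show ((descList (S.erase x)).take (k-1)).sum = _
    rw [descList_erase]
  -- Case A : equality when x is in the top k
  have caseA : x ∈ L.take k → x + topSum (S.erase x) (k - 1) = topSum S k := by
    intro h
    rw [hte, hts, take_erase_of_mem_take _ _ _ h,
      (List.perm_cons_erase h).sum_eq, List.sum_cons]
  -- Case B : x not in the top k
  by_cases hmem : x ∈ L.take k
  · refine ⟨fun _ => (caseA hmem).le, ?_, fun _ => (caseA hmem).le⟩
    rw [caseA hmem]
    have := le_max_left (0:ℝ) (x - L.getD (k-1) 0)
    linarith
  · -- x ∈ drop k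
    have hxdrop : x ∈ L.drop k := by
      have := List.take_append_drop k L
      rw [← this, List.mem_append] at hxL
      tauto
    have hklen : k < L.length := by
      by_contra hc
      push_neg at hc
      rw [List.drop_eq_nil_of_le hc] at hxdrop
      simp at hxdrop
    have hk1 : k - 1 < L.length := lt_of_le_of_lt (Nat.sub_le _ _) hklen
    set m := L.getD (k - 1) 0 with hm
    have hmval : m = L[k-1] := List.getD_eq_getElem L 0 hk1
    have hmtake : m ∈ L.take k := by
      rw [hmval]
      have hlt : k - 1 < (L.take k).length := by
        rw [List.length_take]; omega
      have : (L.take k)[k-1] = L[k-1] := List.getElem_take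
      rw [← this]
      exact List.getElem_mem hlt
    have hxm : x ≤ m := by
      have hp : List.Pairwise (· ≥ ·) (L.take k ++ L.drop k) := by
        rw [List.take_append_drop]; exact hLs
      exact (List.pairwise_append.mp hp).2.2 m hmtake x hxdrop
    have hnot1 : x ∉ L.take (k - 1) := by
      intro hc
      apply hmem
      have : L.take (k-1) = (L.take k).take (k-1) := by
        rw [List.take_take]; congr 1; omega
      rw [this] at hc
      exact List.mem_of_mem_take hc
    have hsum : (L.take k).sum = (L.take (k-1)).sum + m := by
      have := List.sum_take_succ L (k-1) hk1
      rw [← hmval] at this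
      have hkk : k - 1 + 1 = k := by omega
      rw [hkk] at this
      exact this
    have hB : x + topSum (S.erase x) (k - 1) = topSum S k + (x - m) := by
      rw [hte, hts, take_erase_of_not_mem_take _ _ _ hnot1, hsum]
      ring
    refine ⟨fun h => absurd h hmem, ?_, fun _ => ?_⟩
    · rw [hB]
      have := le_max_right (0:ℝ) (x - m)
      linarith
    · rw [hB]
      have : max (0:ℝ) (x - m) = 0 := max_eq_left (by linarith)
      linarith
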